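/- For any unitary matrices U₁, U₂, U₃ on the same finite-dimensional complex Hilbert space, α(U₁† U₃) ≤ α(U₁† U₂) + α(U₂† U₃); that is, the quantity α(U, V) := α(U† V) satisfies the triangle inequality. -/

import Mathlib

open Matrix
open scoped Matrix.Norms.L2Operator Kronecker ComplexOrder

noncomputable section

/-- Maximum argument (taken in `(-π, π]`) of the eigenvalues of a matrix. -/
noncomputable def argMaxSpec {n : ℕ} (U : Matrix (Fin n) (Fin n) ℂ) : ℝ :=
  sSup (Complex.arg '' spectrum ℂ U)

/-- Minimum argument (taken in `(-π, π]`) of the eigenvalues of a matrix. -/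
noncomputable def argMinSpec {n : ℕ} (U : Matrix (Fin n) (Fin n) ℂ) : ℝ :=
  sInf (Complex.arg '' spectrum ℂ U)

/-- Length `α̃(U)` of the shortest arc of the unit circle containing all eigenvalues of `U`. -/
noncomputable def arcLength {n : ℕ} (U : Matrix (Fin n) (Fin n) ℂ) : ℝ :=
  sInf { L : ℝ | 0 ≤ L ∧ ∃ θ : ℝ, ∀ z ∈ spectrum ℂ U, ∃ φ : ℝ,
    θ ≤ φ ∧ φ ≤ θ + L ∧ z = Complex.exp (φ * Complex.I) }

/-- The phase range `α(U) = min {π, α̃(U)}`. -/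
noncomputable def phaseRange {n : ℕ} (U : Matrix (Fin n) (Fin n) ℂ) : ℝ :=
  min Real.pi (arcLength U)

namespace PhaseRangeAux

noncomputable instance {n : ℕ} : CStarAlgebra (Matrix (Fin n) (Fin n) ℂ) := {}

variable {n : ℕ}

/-- Arc membership predicate. -/
def InArc (θ L : ℝ) (U : Matrix (Fin n) (Fin n) ℂ) : Prop :=
  ∀ z ∈ spectrum ℂ U, ∃ φ : ℝ, θ ≤ φ ∧ φ ≤ θ + L ∧ z = Complex.exp (φ * Complex.I)

lemma arcLength_def (U : Matrix (Fin n) (Fin n) ℂ) :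
    arcLength U = sInf { L : ℝ | 0 ≤ L ∧ ∃ θ : ℝ, InArc θ L U } := rfl

lemma isStarNormal_of_mem {M : Matrix (Fin n) (Fin n) ℂ}
    (hM : M ∈ Matrix.unitaryGroup (Fin n) ℂ) : IsStarNormal M :=
  ⟨by rw [Commute, SemiconjBy, Matrix.mem_unitaryGroup_iff'.mp hM,
      Matrix.mem_unitaryGroup_iff.mp hM]⟩

lemma abs_one_of_spectrum {M : Matrix (Fin n) (Fin n) ℂ}
    (hM : M ∈ Matrix.unitaryGroup (Fin n) ℂ) {z : ℂ} (hz : z ∈ spectrum ℂ M) :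
    ‖z‖ = 1 := by
  have := spectrum.subset_circle_of_unitary hM hz
  simpa using mem_sphere_zero_iff_norm.mp this

lemma star_dot_conjTranspose (M : Matrix (Fin n) (Fin n) ℂ) (x : Fin n → ℂ) :
    star x ⬝ᵥ (Mᴴ *ᵥ x) = star (star x ⬝ᵥ (M *ᵥ x)) := by
  simp only [dotProduct, Matrix.mulVec, Matrix.conjTranspose_apply, Pi.star_apply,
    star_sum, star_mul', star_star, Finset.mul_sum]
  rw [Finset.sum_comm]
  refine Finset.sum_congr rfl fun i _ => Finset.sum_congr rfl fun j _ => by ring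

lemma dot_self_eq (x : Fin n → ℂ) :
    star x ⬝ᵥ x = ((∑ i, Complex.normSq (x i) : ℝ) : ℂ) := by
  simp only [dotProduct, Pi.star_apply, Complex.star_def]
  push_cast
  refine Finset.sum_congr rfl fun i _ => ?_
  rw [Complex.normSq_eq_conj_mul_self]

lemma dot_self_pos {x : Fin n → ℂ} (hx : x ≠ 0) :
    0 < ∑ i, Complex.normSq (x i) := by
  obtain ⟨i, hi⟩ : ∃ i, x i ≠ 0 := by
    by_contra h
    push_neg at h
    exact hx (funext h)
  refine Finset.sum_pos' (fun j _ => Complex.normSq_nonneg _) ⟨i, Finset.mem_univ i, ?_⟩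
  simpa [Complex.normSq_pos] using hi

/-- Positive semidefiniteness of real-linear combinations `p•M + p̄•Mᴴ + c•1`
whose symbol is nonnegative on the spectrum. -/
lemma posSemidef_combo {M : Matrix (Fin n) (Fin n) ℂ}
    (hM : M ∈ Matrix.unitaryGroup (Fin n) ℂ) (p : ℂ) (c : ℝ)
    (h : ∀ z ∈ spectrum ℂ M, (0 : ℂ) ≤ p * z + star p * star z + (c : ℂ)) :
    (p • M + star p • Mᴴ + (c : ℂ) • (1 : Matrix (Fin n) (Fin n) ℂ)).PosSemidef := by
  have hnorm : IsStarNormal M := isStarNormal_of_mem hM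
  set f : ℂ → ℂ := fun z => p * z + star p * star z + (c : ℂ) with hf
  have c1 : ContinuousOn (fun z : ℂ => p * z) (spectrum ℂ M) :=
    (continuous_const.mul continuous_id).continuousOn
  have c2 : ContinuousOn (fun z : ℂ => star p * star z) (spectrum ℂ M) :=
    (continuous_const.mul continuous_star).continuousOn
  have hcfc : cfc f M = p • M + star p • Mᴴ + (c : ℂ) • 1 := by
    have h1 : cfc f M
        = cfc (fun z : ℂ => p * z + star p * star z) M + cfc (fun _ : ℂ => (c : ℂ)) M :=
      cfc_add M _ _ (c1.add c2) continuousOn_const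
    have h2 : cfc (fun z : ℂ => p * z + star p * star z) M
        = cfc (fun z : ℂ => p * z) M + cfc (fun z : ℂ => star p * star z) M :=
      cfc_add M _ _ c1 c2
    have h3 : cfc (fun z : ℂ => p * z) M = p • M := by
      rw [cfc_const_mul p (fun z : ℂ => z) M continuous_id.continuousOn, cfc_id' ℂ M hnorm]
    have h4 : cfc (fun z : ℂ => star p * star z) M = star p • Mᴴ := by
      rw [cfc_const_mul (star p) (fun z : ℂ => star z) M continuous_star.continuousOn]
      rw [show (fun z : ℂ => star z) = (fun z : ℂ => star (id z)) from rfl]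
      rw [cfc_star (id : ℂ → ℂ) M, cfc_id ℂ M hnorm, Matrix.star_eq_conjTranspose]
    have h5 : cfc (fun _ : ℂ => (c : ℂ)) M = (c : ℂ) • 1 := by
      rw [cfc_const (c : ℂ) M hnorm, Algebra.algebraMap_eq_smul_one]
    rw [h1, h2, h3, h4, h5]
  have hherm : (p • M + star p • Mᴴ + (c : ℂ) • (1 : Matrix (Fin n) (Fin n) ℂ)).IsHermitian := by
    unfold Matrix.IsHermitian
    simp only [Matrix.conjTranspose_add, Matrix.conjTranspose_smul,
      Matrix.conjTranspose_conjTranspose, Matrix.conjTranspose_one, star_star,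
      Complex.star_def, Complex.conj_conj, Complex.conj_ofReal]
    abel
  have hspec : spectrum ℂ (p • M + star p • Mᴴ + (c : ℂ) • (1 : Matrix (Fin n) (Fin n) ℂ))
      = f '' spectrum ℂ M := by
    rw [← hcfc]
    exact cfc_map_spectrum f M
  refine (Matrix.IsHermitian.posSemidef_iff_eigenvalues_nonneg hherm).mpr (Pi.le_def.mpr fun i => show (0:ℝ) ≤ _ from ?_)
  have hmem : ((hherm.eigenvalues i : ℝ) : ℂ)
      ∈ spectrum ℂ (p • M + star p • Mᴴ + (c : ℂ) • (1 : Matrix (Fin n) (Fin n) ℂ)) := by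
    have h1 := hherm.eigenvalues_mem_spectrum_real i
    have := spectrum.algebraMap_mem ℂ h1
    simpa using this
  rw [hspec] at hmem
  obtain ⟨z, hz, hzeq⟩ := hmem
  have h0 : (0 : ℂ) ≤ ((hherm.eigenvalues i : ℝ) : ℂ) := hzeq ▸ h z hz
  exact_mod_cast h0

/-- The basic inequality extracted from `posSemidef_combo`. -/
lemma re_ineq {M : Matrix (Fin n) (Fin n) ℂ}
    (hM : M ∈ Matrix.unitaryGroup (Fin n) ℂ) (p : ℂ) (c : ℝ)
    (h : ∀ z ∈ spectrum ℂ M, (0 : ℂ) ≤ p * z + star p * star z + (c : ℂ))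
    (x : Fin n → ℂ) :
    0 ≤ 2 * (p * (star x ⬝ᵥ M *ᵥ x)).re + c * ∑ i, Complex.normSq (x i) := by
  have hps := posSemidef_combo hM p c h
  have hre := hps.re_dotProduct_nonneg x
  have hexp : star x ⬝ᵥ ((p • M + star p • Mᴴ + (c : ℂ) • (1 : Matrix (Fin n) (Fin n) ℂ)) *ᵥ x)
      = p * (star x ⬝ᵥ M *ᵥ x) + star (p * (star x ⬝ᵥ M *ᵥ x))
        + (c : ℂ) * ((∑ i, Complex.normSq (x i) : ℝ) : ℂ) := by
    rw [Matrix.add_mulVec, Matrix.add_mulVec, dotProduct_add, dotProduct_add,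
      Matrix.smul_mulVec, Matrix.smul_mulVec, Matrix.smul_mulVec,
      Matrix.one_mulVec, dotProduct_smul, dotProduct_smul, dotProduct_smul,
      star_dot_conjTranspose, dot_self_eq]
    simp only [smul_eq_mul, star_mul', star_star]
    try ring
  rw [hexp] at hre
  simp only [RCLike.re_to_complex, Complex.add_re, Complex.conj_re, Complex.mul_re,
    Complex.ofReal_re, Complex.ofReal_im, Complex.star_def] at hre
  simp only [Complex.mul_re]
  linarith [hre]

/-- Numerical range of a unitary with spectrum in a centered arc lies in the corresponding cone. -/
lemma cone {M : Matrix (Fin n) (Fin n) ℂ} (hM : M ∈ Matrix.unitaryGroup (Fin n) ℂ)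
    {s : ℝ} (hs0 : 0 ≤ s) (hsπ : s < Real.pi)
    (harc : ∀ z ∈ spectrum ℂ M, ∃ φ : ℝ, |φ| ≤ s / 2 ∧ z = Complex.exp ((φ : ℂ) * Complex.I))
    {x : Fin n → ℂ} (hx : x ≠ 0) :
    ∃ ψ : ℝ, |ψ| ≤ s / 2 ∧ ∃ r : ℝ, 0 < r ∧
      star x ⬝ᵥ M *ᵥ x = (r : ℂ) * Complex.exp ((ψ : ℂ) * Complex.I) := by
  set w : ℂ := star x ⬝ᵥ M *ᵥ x with hw
  set T : ℝ := ∑ i, Complex.normSq (x i) with hT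
  have hTpos : 0 < T := dot_self_pos hx
  have key : ∀ p : ℂ, ∀ c : ℝ,
      (∀ φ : ℝ, |φ| ≤ s / 2 → 0 ≤ 2 * (p.re * Real.cos φ - p.im * Real.sin φ) + c) →
      0 ≤ 2 * (p * w).re + c * T := by
    intro p c hpc
    refine re_ineq hM p c (fun z hz => ?_) x
    obtain ⟨φ, hφ, rfl⟩ := harc z hz
    have h1 : p * Complex.exp ((φ : ℂ) * Complex.I)
          + star p * star (Complex.exp ((φ : ℂ) * Complex.I)) + (c : ℂ)
        = ((2 * ((p * Complex.exp ((φ : ℂ) * Complex.I)).re) + c : ℝ) : ℂ) := by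
      rw [← star_mul', Complex.star_def, Complex.add_conj]
      push_cast
      ring
    rw [h1]
    rw [Complex.zero_le_real]
    have h2 : (p * Complex.exp ((φ : ℂ) * Complex.I)).re
        = p.re * Real.cos φ - p.im * Real.sin φ := by
      rw [Complex.mul_re, Complex.exp_ofReal_mul_I_re, Complex.exp_ofReal_mul_I_im]
    rw [h2]
    exact hpc φ hφ
  have hcos : 0 < Real.cos (s / 2) := by
    apply Real.cos_pos_of_mem_Ioo
    constructor
    · nlinarith [Real.pi_pos]
    · linarith
  -- inequality (i): real part bounded below
  have h1 : 0 ≤ 2 * w.re + (-(2 * Real.cos (s / 2))) * T := by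
    have := key 1 (-(2 * Real.cos (s / 2))) (fun φ hφ => by
      have : Real.cos (s / 2) ≤ Real.cos φ := by
        rw [← Real.cos_abs φ]
        apply Real.cos_le_cos_of_nonneg_of_le_pi (abs_nonneg φ) (by linarith)
        exact hφ
      simp only [Complex.one_re, Complex.one_im]
      linarith)
    simpa using this
  -- inequality (ii)
  have h2 : 0 ≤ Real.sin (s / 2) * w.re - Real.cos (s / 2) * w.im := by
    have := key ((Real.sin (s / 2) : ℂ) + (Real.cos (s / 2) : ℂ) * Complex.I) 0 (fun φ hφ => by
      rw [abs_le] at hφ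
      simp only [Complex.add_re, Complex.add_im, Complex.ofReal_re, Complex.ofReal_im,
        Complex.mul_re, Complex.mul_im, Complex.I_re, Complex.I_im]
      have : 0 ≤ Real.sin (s / 2 - φ) :=
        Real.sin_nonneg_of_nonneg_of_le_pi (by linarith) (by linarith)
      rw [Real.sin_sub] at this
      linarith)
    simp only [Complex.add_re, Complex.add_im, Complex.ofReal_re, Complex.ofReal_im,
      Complex.mul_re, Complex.mul_im, Complex.I_re, Complex.I_im] at this ⊢
    nlinarith [this]
  -- inequality (iii)
  have h3 : 0 ≤ Real.sin (s / 2) * w.re + Real.cos (s / 2) * w.im := by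
    have := key ((Real.sin (s / 2) : ℂ) - (Real.cos (s / 2) : ℂ) * Complex.I) 0 (fun φ hφ => by
      rw [abs_le] at hφ
      simp only [Complex.sub_re, Complex.sub_im, Complex.ofReal_re, Complex.ofReal_im,
        Complex.mul_re, Complex.mul_im, Complex.I_re, Complex.I_im]
      have : 0 ≤ Real.sin (s / 2 + φ) :=
        Real.sin_nonneg_of_nonneg_of_le_pi (by linarith) (by linarith)
      rw [Real.sin_add] at this
      linarith)
    simp only [Complex.sub_re, Complex.sub_im, Complex.ofReal_re, Complex.ofReal_im,
      Complex.mul_re, Complex.mul_im, Complex.I_re, Complex.I_im] at this ⊢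
    nlinarith [this]
  have hwre : 0 < w.re := by nlinarith [h1, hTpos, hcos]
  have hwne : w ≠ 0 := fun h => by rw [h] at hwre; simp at hwre
  set ψ : ℝ := Complex.arg w with hψ
  set r : ℝ := ‖w‖ with hrdef
  have hrpos : 0 < r := norm_pos_iff.mpr hwne
  have hsinψ : Real.sin ψ = w.im / r := Complex.sin_arg w
  have hcosψ : Real.cos ψ = w.re / r := Complex.cos_arg hwne
  have him : w.im = r * Real.sin ψ := by rw [hsinψ]; field_simp
  have hre' : w.re = r * Real.cos ψ := by rw [hcosψ]; field_simp
  have hψlt : |ψ| < Real.pi / 2 := Complex.abs_arg_lt_pi_div_two_iff.mpr (Or.inl hwre)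
  rw [abs_lt] at hψlt
  refine ⟨ψ, ?_, r, hrpos, (Complex.norm_mul_exp_arg_mul_I w).symm⟩
  rw [abs_le]
  constructor
  · by_contra hcon
    push_neg at hcon
    -- ψ < -(s/2) : then sin (ψ + s/2) < 0 but (iii) says ≥ 0
    have hlt : Real.sin (ψ + s / 2) < 0 := by
      apply Real.sin_neg_of_neg_of_neg_pi_lt (by linarith)
      nlinarith [Real.pi_pos]
    rw [Real.sin_add] at hlt
    rw [him, hre'] at h3
    nlinarith [hrpos, hlt, h3]
  · by_contra hcon
    push_neg at hcon
    have hlt : 0 < Real.sin (ψ - s / 2) := by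
      apply Real.sin_pos_of_pos_of_lt_pi (by linarith)
      nlinarith [Real.pi_pos]
    rw [Real.sin_sub] at hlt
    rw [him, hre'] at h2
    nlinarith [hrpos, hlt, h2]

/-- A scalar multiple of a unitary by a unit complex number is unitary. -/
lemma smul_mem_unitary {M : Matrix (Fin n) (Fin n) ℂ}
    (hM : M ∈ Matrix.unitaryGroup (Fin n) ℂ) (γ : ℝ) :
    Complex.exp ((γ : ℂ) * Complex.I) • M ∈ Matrix.unitaryGroup (Fin n) ℂ := by
  rw [Matrix.mem_unitaryGroup_iff']
  rw [Matrix.star_eq_conjTranspose, Matrix.conjTranspose_smul, Matrix.smul_mul, Matrix.mul_smul,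
    ← Matrix.star_eq_conjTranspose, Matrix.mem_unitaryGroup_iff'.mp hM, smul_smul]
  have : star (Complex.exp ((γ : ℂ) * Complex.I)) * Complex.exp ((γ : ℂ) * Complex.I) = 1 := by
    rw [Complex.star_def, ← Complex.exp_conj, ← Complex.exp_add,
      show ((starRingEnd ℂ) ((γ:ℂ) * Complex.I) + (γ:ℂ)*Complex.I) = 0 by
        rw [_root_.map_mul, Complex.conj_I, Complex.conj_ofReal]; ring,
      Complex.exp_zero]
  rw [this, one_smul]

/-- Numerical range of a unitary with spectrum in an arbitrary arc lies in the corresponding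
cone. -/
lemma numRange {M : Matrix (Fin n) (Fin n) ℂ} (hM : M ∈ Matrix.unitaryGroup (Fin n) ℂ)
    {s θ : ℝ} (hs0 : 0 ≤ s) (hsπ : s < Real.pi) (harc : InArc θ s M)
    {x : Fin n → ℂ} (hx : x ≠ 0) :
    ∃ ψ : ℝ, θ ≤ ψ ∧ ψ ≤ θ + s ∧ ∃ r : ℝ, 0 < r ∧
      star x ⬝ᵥ M *ᵥ x = (r : ℂ) * Complex.exp ((ψ : ℂ) * Complex.I) := by
  set γ : ℝ := θ + s / 2 with hγ
  set c : ℂ := Complex.exp ((-γ : ℝ) * Complex.I) with hc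
  have hcne : c ≠ 0 := Complex.exp_ne_zero _
  set M' : Matrix (Fin n) (Fin n) ℂ := c • M with hM'
  have hM'mem : M' ∈ Matrix.unitaryGroup (Fin n) ℂ := smul_mem_unitary hM (-γ)
  have harc' : ∀ z ∈ spectrum ℂ M', ∃ φ : ℝ, |φ| ≤ s / 2 ∧ z = Complex.exp ((φ : ℂ) * Complex.I) := by
    intro z hz
    obtain ⟨z₀, hz₀, rfl⟩ : ∃ z₀, z₀ ∈ spectrum ℂ M ∧ z = c * z₀ := by
      refine ⟨c⁻¹ * z, ?_, by rw [mul_inv_cancel_left₀ hcne]⟩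
      have h' : (Units.mk0 c hcne) • (c⁻¹ * z) ∈ spectrum ℂ ((Units.mk0 c hcne) • M) := by
        simpa [Units.smul_def, smul_eq_mul, mul_inv_cancel_left₀ hcne, hM'] using hz
      exact spectrum.smul_mem_smul_iff.mp h'
    obtain ⟨φ₀, hφ₁, hφ₂, rfl⟩ := harc z₀ hz₀
    refine ⟨φ₀ - γ, ?_, ?_⟩
    · rw [abs_le]
      refine ⟨by simp only [hγ]; linarith, by simp only [hγ]; linarith⟩
    · rw [hc, ← Complex.exp_add]
      push_cast
      ring_nf
  obtain ⟨ψ', hψ', r, hr, heq⟩ := cone hM'mem hs0 hsπ harc' hx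
  refine ⟨γ + ψ', by rw [abs_le] at hψ'; simp only [hγ]; linarith,
    by rw [abs_le] at hψ'; simp only [hγ]; linarith, r, hr, ?_⟩
  have hdot : star x ⬝ᵥ M' *ᵥ x = c * (star x ⬝ᵥ M *ᵥ x) := by
    rw [hM', Matrix.smul_mulVec, dotProduct_smul, smul_eq_mul]
  rw [hdot] at heq
  have : Complex.exp ((γ : ℝ) * Complex.I) * c = 1 := by
    rw [hc, ← Complex.exp_add]
    rw [show ((γ:ℝ):ℂ) * Complex.I + ((-γ:ℝ):ℂ) * Complex.I = 0 by push_cast; ring,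
      Complex.exp_zero]
  calc star x ⬝ᵥ M *ᵥ x
      = Complex.exp ((γ : ℝ) * Complex.I) * (c * (star x ⬝ᵥ M *ᵥ x)) := by
        rw [← mul_assoc, this, one_mul]
    _ = (r : ℂ) * Complex.exp (((γ + ψ' : ℝ) : ℂ) * Complex.I) := by
        rw [heq, ← mul_assoc, mul_comm (Complex.exp _) (r : ℂ), mul_assoc, ← Complex.exp_add]
        push_cast
        ring_nf

/-- Spectrum of a product of unitaries whose spectra lie in arcs lies in the sum arc. -/
lemma inArc_mul {A B : Matrix (Fin n) (Fin n) ℂ}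
    (hA : A ∈ Matrix.unitaryGroup (Fin n) ℂ) (hB : B ∈ Matrix.unitaryGroup (Fin n) ℂ)
    {θ₁ θ₂ s t : ℝ} (hs0 : 0 ≤ s) (ht0 : 0 ≤ t) (hst : s + t < Real.pi)
    (h₁ : InArc θ₁ s A) (h₂ : InArc θ₂ t B) : InArc (θ₁ + θ₂) (s + t) (A * B) := by
  intro lam hlam
  have hABmem : A * B ∈ Matrix.unitaryGroup (Fin n) ℂ := mul_mem hA hB
  -- |lam| = 1
  have hlamabs : ‖lam‖ = 1 := abs_one_of_spectrum hABmem hlam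
  -- eigenvector
  have hEig : Module.End.HasEigenvalue (Matrix.toLinAlgEquiv' (A * B)) lam := by
    rw [Module.End.hasEigenvalue_iff_mem_spectrum, AlgEquiv.spectrum_eq]
    exact hlam
  obtain ⟨x, hx⟩ := hEig.exists_hasEigenvector
  have hxne : x ≠ 0 := hx.right
  have hxeq : (A * B) *ᵥ x = lam • x := by
    have := hx.apply_eq_smul
    rwa [Matrix.toLinAlgEquiv'_apply] at this
  -- relation between the two numerical-range values
  have hBx : B *ᵥ x = lam • (Aᴴ *ᵥ x) := by
    have h1 : Aᴴ *ᵥ ((A * B) *ᵥ x) = Aᴴ *ᵥ (lam • x) := by rw [hxeq]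
    rw [Matrix.mulVec_mulVec, ← Matrix.mul_assoc, ← Matrix.star_eq_conjTranspose,
      Matrix.mem_unitaryGroup_iff'.mp hA, Matrix.one_mul, Matrix.mulVec_smul] at h1
    exact h1
  have hwv : star x ⬝ᵥ B *ᵥ x = lam * star (star x ⬝ᵥ A *ᵥ x) := by
    rw [hBx, dotProduct_smul, smul_eq_mul, ← star_dot_conjTranspose]
  -- apply the numerical range results
  obtain ⟨ψ₁, hψ₁l, hψ₁r, r₁, hr₁, hv⟩ := numRange hA hs0 (by linarith) h₁ hxne
  obtain ⟨ψ₂, hψ₂l, hψ₂r, r₂, hr₂, hw⟩ := numRange hB ht0 (by linarith) h₂ hxne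
  rw [hv, hw] at hwv
  have hstar : star ((r₁ : ℂ) * Complex.exp ((ψ₁ : ℂ) * Complex.I))
      = (r₁ : ℂ) * Complex.exp (((-ψ₁ : ℝ) : ℂ) * Complex.I) := by
    rw [star_mul', Complex.star_def, Complex.conj_ofReal, ← Complex.exp_conj,
      show (starRingEnd ℂ) ((ψ₁ : ℂ) * Complex.I) = ((-ψ₁ : ℝ) : ℂ) * Complex.I by
        rw [_root_.map_mul, Complex.conj_I, Complex.conj_ofReal]; push_cast; ring]
  rw [hstar] at hwv
  have hne1 : ((r₁ : ℝ) : ℂ) ≠ 0 := by exact_mod_cast hr₁.ne'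
  have hlameq : lam * (r₁ : ℂ) = (r₂ : ℂ) * Complex.exp (((ψ₁ + ψ₂ : ℝ) : ℂ) * Complex.I) := by
    calc lam * (r₁ : ℂ)
        = lam * ((r₁ : ℂ) * Complex.exp (((-ψ₁ : ℝ) : ℂ) * Complex.I))
          * Complex.exp ((ψ₁ : ℂ) * Complex.I) := by
          rw [mul_assoc, mul_assoc, ← Complex.exp_add,
            show ((-ψ₁ : ℝ) : ℂ) * Complex.I + (ψ₁ : ℂ) * Complex.I = 0 by push_cast; ring,
            Complex.exp_zero, mul_one]
      _ = (r₂ : ℂ) * Complex.exp ((ψ₂ : ℂ) * Complex.I) * Complex.exp ((ψ₁ : ℂ) * Complex.I) := by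
          rw [← hwv]
      _ = (r₂ : ℂ) * Complex.exp (((ψ₁ + ψ₂ : ℝ) : ℂ) * Complex.I) := by
          rw [mul_assoc, ← Complex.exp_add]
          push_cast
          ring_nf
  have habs : r₁ = r₂ := by
    have := congrArg norm hlameq
    simpa [_root_.map_mul, hlamabs, Complex.norm_real, abs_of_pos hr₁, abs_of_pos hr₂,
      Complex.norm_exp] using this
  refine ⟨ψ₁ + ψ₂, by linarith, by linarith, ?_⟩
  rw [habs] at hlameq hne1
  rw [mul_comm] at hlameq
  exact mul_left_cancel₀ hne1 hlameq

lemma two_pi_mem {U : Matrix (Fin n) (Fin n) ℂ} (hU : U ∈ Matrix.unitaryGroup (Fin n) ℂ) :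
    (2 * Real.pi) ∈ { L : ℝ | 0 ≤ L ∧ ∃ θ : ℝ, InArc θ L U } := by
  refine ⟨by positivity, -Real.pi, fun z hz => ?_⟩
  refine ⟨Complex.arg z, (Complex.neg_pi_lt_arg z).le, by linarith [Complex.arg_le_pi z], ?_⟩
  have := Complex.norm_mul_exp_arg_mul_I z
  rw [abs_one_of_spectrum hU hz] at this
  simpa using this.symm

lemma arcLength_nonneg (U : Matrix (Fin n) (Fin n) ℂ) : 0 ≤ arcLength U :=
  Real.sInf_nonneg fun _ hL => hL.1

lemma arcLength_le {U : Matrix (Fin n) (Fin n) ℂ} {θ L : ℝ} (h0 : 0 ≤ L) (h : InArc θ L U) :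
    arcLength U ≤ L :=
  csInf_le ⟨0, fun _ hL' => hL'.1⟩ ⟨h0, θ, h⟩

lemma exists_inArc {U : Matrix (Fin n) (Fin n) ℂ} (hU : U ∈ Matrix.unitaryGroup (Fin n) ℂ)
    {ε : ℝ} (hε : 0 < ε) : ∃ θ : ℝ, InArc θ (arcLength U + ε) U := by
  have hne : { L : ℝ | 0 ≤ L ∧ ∃ θ : ℝ, InArc θ L U }.Nonempty := ⟨2 * Real.pi, two_pi_mem hU⟩
  have hbdd : BddBelow { L : ℝ | 0 ≤ L ∧ ∃ θ : ℝ, InArc θ L U } := ⟨0, fun _ hL => hL.1⟩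
  have hlt : sInf { L : ℝ | 0 ≤ L ∧ ∃ θ : ℝ, InArc θ L U } < arcLength U + ε := by
    rw [← arcLength_def]; linarith
  obtain ⟨L, ⟨hL0, θ, hLarc⟩, hLlt⟩ := (csInf_lt_iff hbdd hne).mp hlt
  exact ⟨θ, fun z hz => by
    obtain ⟨φ, h1, h2, h3⟩ := hLarc z hz
    exact ⟨φ, h1, by linarith, h3⟩⟩

end PhaseRangeAux

open PhaseRangeAux

/-- The quantity `α(U, V) := α(U† V)` satisfies the triangle inequality. -/
theorem phaseRange_triangle {n : ℕ} (U₁ U₂ U₃ : Matrix (Fin n) (Fin n) ℂ)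
    (hU₁ : U₁ ∈ Matrix.unitaryGroup (Fin n) ℂ) (hU₂ : U₂ ∈ Matrix.unitaryGroup (Fin n) ℂ)
    (hU₃ : U₃ ∈ Matrix.unitaryGroup (Fin n) ℂ) :
    phaseRange (U₁ᴴ * U₃) ≤ phaseRange (U₁ᴴ * U₂) + phaseRange (U₂ᴴ * U₃) := by
  have h1 : U₁ᴴ ∈ Matrix.unitaryGroup (Fin n) ℂ := by
    rw [← Matrix.star_eq_conjTranspose]; exact Unitary.star_mem hU₁
  have h2 : U₂ᴴ ∈ Matrix.unitaryGroup (Fin n) ℂ := by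
    rw [← Matrix.star_eq_conjTranspose]; exact Unitary.star_mem hU₂
  have hAmem : U₁ᴴ * U₂ ∈ Matrix.unitaryGroup (Fin n) ℂ := mul_mem h1 hU₂
  have hBmem : U₂ᴴ * U₃ ∈ Matrix.unitaryGroup (Fin n) ℂ := mul_mem h2 hU₃
  have hCmem : U₁ᴴ * U₃ ∈ Matrix.unitaryGroup (Fin n) ℂ := mul_mem h1 hU₃
  have hABeq : (U₁ᴴ * U₂) * (U₂ᴴ * U₃) = U₁ᴴ * U₃ := by
    rw [Matrix.mul_assoc, ← Matrix.mul_assoc U₂ U₂ᴴ U₃, ← Matrix.star_eq_conjTranspose U₂,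
      Matrix.mem_unitaryGroup_iff.mp hU₂, Matrix.one_mul]
  rcases le_or_gt Real.pi (phaseRange (U₁ᴴ * U₂) + phaseRange (U₂ᴴ * U₃)) with hple | hplt
  · exact le_trans (min_le_left _ _) hple
  · have hA0 : 0 ≤ phaseRange (U₁ᴴ * U₂) := le_min Real.pi_pos.le (arcLength_nonneg _)
    have hB0 : 0 ≤ phaseRange (U₂ᴴ * U₃) := le_min Real.pi_pos.le (arcLength_nonneg _)
    have haA : phaseRange (U₁ᴴ * U₂) = arcLength (U₁ᴴ * U₂) := by
      have hlt : min Real.pi (arcLength (U₁ᴴ * U₂)) < Real.pi := by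
        have : phaseRange (U₁ᴴ * U₂) < Real.pi := by linarith
        exact this
      have : arcLength (U₁ᴴ * U₂) < Real.pi := by
        by_contra hc
        push_neg at hc
        rw [min_eq_left hc] at hlt
        exact lt_irrefl _ hlt
      exact min_eq_right this.le
    have haB : phaseRange (U₂ᴴ * U₃) = arcLength (U₂ᴴ * U₃) := by
      have hlt : min Real.pi (arcLength (U₂ᴴ * U₃)) < Real.pi := by
        have : phaseRange (U₂ᴴ * U₃) < Real.pi := by linarith
        exact this
      have : arcLength (U₂ᴴ * U₃) < Real.pi := by
        by_contra hc
        push_neg at hc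
        rw [min_eq_left hc] at hlt
        exact lt_irrefl _ hlt
      exact min_eq_right this.le
    rw [haA, haB] at hplt ⊢
    rw [haA] at hA0
    rw [haB] at hB0
    refine le_trans (min_le_right _ _) ?_
    by_contra hcon
    push_neg at hcon
    set aA := arcLength (U₁ᴴ * U₂) with haAdef
    set aB := arcLength (U₂ᴴ * U₃) with haBdef
    set cc := arcLength (U₁ᴴ * U₃) with hccdef
    set ε : ℝ := min ((cc - (aA + aB)) / 3) ((Real.pi - (aA + aB)) / 3) with hεdef
    have hεpos : 0 < ε := lt_min (by linarith) (by linarith)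
    have hε1 : ε ≤ (cc - (aA + aB)) / 3 := min_le_left _ _
    have hε2 : ε ≤ (Real.pi - (aA + aB)) / 3 := min_le_right _ _
    obtain ⟨θ₁, harc₁⟩ := exists_inArc hAmem hεpos
    obtain ⟨θ₂, harc₂⟩ := exists_inArc hBmem hεpos
    have hmul := inArc_mul hAmem hBmem (by linarith) (by linarith)
      (by linarith : (aA + ε) + (aB + ε) < Real.pi) harc₁ harc₂
    rw [hABeq] at hmul
    have hle : cc ≤ (aA + ε) + (aB + ε) := arcLength_le (by linarith) hmul
    linarith
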